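/- arXiv:2008.00284 — 9 statements merged into one kernel-verified Lean document; each statement's English description precedes it below -/
import Mathlib

section
/- For all nonnegative integers n and positive integers p, q: sum_{k=0}^{2n} (-1)^k * binomial(q+k-1, k) * H_{2n-k}^{(p,q)} = (1/2^p) * H_n^{(p,q)}, where H_n^{(p,q)} are the generalized hyperharmonic numbers. -/
open Finset

/-- `harmonic m` is the `m`-th harmonic number `H_m = ∑_{k=1}^m 1/k`. -/
def harmonic' (m : ℕ) : ℚ := ∑ k ∈ Finset.range m, 1/(k+1 : ℚ)

/-- Hyperharmonic numbers: `hyperh r n = h_n^{(r)}` with `h_n^{(0)} = 1/n`. -/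
def hyperh : ℕ → ℕ → ℚ
  | 0, n => if n = 0 then 0 else 1/(n:ℚ)
  | r+1, n => ∑ k ∈ Finset.Icc 1 n, hyperh r k

/-- Generalized hyperharmonic numbers: `GH p r n = H_n^{(p,r)}` with `H_k^{(p,0)} = 1/k^p`. -/
def GH (p : ℤ) : ℕ → ℕ → ℚ
  | 0, n => if n = 0 then 0 else (n:ℚ)^(-p)
  | r+1, n => ∑ k ∈ Finset.Icc 1 n, GH p r k

/-- Generalized harmonic numbers `H_m^{(p)} = ∑_{j=1}^m 1/j^p`. -/
def genH (p m : ℕ) : ℚ := ∑ j ∈ Finset.Icc 1 m, 1/(j:ℚ)^p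

/-- Hyper-sums: `hS p q n = S_p^{(q)}(n)` with `S_p^{(0)}(n) = ∑_{k=1}^n k^p`. -/
def hS (p : ℕ) : ℕ → ℕ → ℕ
  | 0, n => ∑ k ∈ Finset.Icc 1 n, k^p
  | q+1, n => ∑ k ∈ Finset.Icc 1 n, hS p q k

/-- Stirling numbers of the second kind. -/
def stirling2 : ℕ → ℕ → ℕ
  | 0, 0 => 1
  | 0, _+1 => 0
  | _+1, 0 => 0
  | n+1, k+1 => (k+1) * stirling2 n (k+1) + stirling2 n k

/-- `r`-Stirling numbers of the second kind: `rstirling2 r n k = {n+r, k+r}_r`. -/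
def rstirling2 (r : ℕ) : ℕ → ℕ → ℕ
  | 0, 0 => 1
  | 0, _+1 => 0
  | n+1, 0 => r * rstirling2 r n 0
  | n+1, k+1 => (k+1+r) * rstirling2 r n (k+1) + rstirling2 r n k

/-- `r`-Stirling numbers of the first kind: `rstirling1 r n k = [n+r, k+r]_r`.
In particular `rstirling1 0 n k` is the unsigned Stirling number of the first kind. -/
def rstirling1 (r : ℕ) : ℕ → ℕ → ℕ
  | 0, 0 => 1
  | 0, _+1 => 0
  | n+1, 0 => (n+r) * rstirling1 r n 0
  | n+1, k+1 => (n+r) * rstirling1 r n (k+1) + rstirling1 r n k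

/-- Binomial coefficient with (possibly negative) integer upper argument. -/
def binomZ (x : ℤ) (k : ℕ) : ℚ :=
  (∏ i ∈ Finset.range k, ((x:ℚ) - i)) / (Nat.factorial k)

/-- Congruence of rationals mod `m`: `x ≡ y (mod m)` iff `m ∣ (x.num * y.den - y.num * x.den)`. -/
def ratMod (m : ℕ) (x y : ℚ) : Prop := (m:ℤ) ∣ (x.num * (y.den:ℤ) - y.num * (x.den:ℤ))

/-- Poly-Bernoulli numbers of negative index: `polyBN p n = B_n^{(-p)}`. -/
def polyBN (p n : ℕ) : ℤ :=
  (-1)^n * ∑ m ∈ Finset.range (n+1),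
    (stirling2 n m : ℤ) * (-1)^m * (Nat.factorial m : ℤ) * ((m:ℤ)+1)^p

/-- Poly-Bernoulli polynomial values of negative index: `polyBP p n q = B_n^{(-p)}(q)`. -/
def polyBP (p n q : ℕ) : ℤ :=
  ∑ j ∈ Finset.range (n+1), (n.choose j : ℤ) * polyBN p j * (q:ℤ)^(n-j)

def Saux (Q m : ℕ) : ℚ :=
  ∑ k ∈ range (m+1), (-1:ℚ)^k * ((Q+k).choose k : ℚ) * ((Q+(m-k)).choose (m-k) : ℚ)

def Aaux (Q m : ℕ) : ℚ :=
  ∑ k ∈ range (m+1), (-1:ℚ)^k * ((Q+k).choose k : ℚ) * ((Q+1+(m-k)).choose (m-k) : ℚ)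

lemma hockey (Q T : ℕ) : ∑ t ∈ range (T+1), ((Q+t).choose t : ℚ) = ((Q+1+T).choose T : ℚ) := by
  induction T with
  | zero => simp
  | succ T ih =>
    rw [sum_range_succ, ih]
    have h : (Q+1+(T+1)).choose (T+1) = (Q+T+1).choose T + (Q+T+1).choose (T+1) := by
      rw [show Q+1+(T+1) = (Q+T+1)+1 by omega, Nat.choose_succ_succ]
    rw [show Q+1+T = Q+T+1 by omega, show Q+(T+1) = Q+T+1 by omega]
    push_cast [h]
    ring

lemma Aaux_rec (Q m : ℕ) : Aaux Q (m+1) = Saux Q (m+1) + Aaux Q m := by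
  have key : ∀ k ∈ range (m+1),
      (-1:ℚ)^k * ((Q+k).choose k : ℚ) * ((Q+1+(m+1-k)).choose (m+1-k) : ℚ)
      = (-1:ℚ)^k * ((Q+k).choose k : ℚ) * ((Q+1+(m-k)).choose (m-k) : ℚ)
        + (-1:ℚ)^k * ((Q+k).choose k : ℚ) * ((Q+(m+1-k)).choose (m+1-k) : ℚ) := by
    intro k hk
    rw [Finset.mem_range] at hk
    have h1 : m + 1 - k = (m - k) + 1 := by omega
    have h2 : (Q+1+(m+1-k)).choose (m+1-k)
        = (Q+1+(m-k)).choose ((m-k)+1) + (Q+1+(m-k)).choose (m-k) := by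
      rw [h1, show Q+1+((m-k)+1) = (Q+1+(m-k))+1 by omega, Nat.choose_succ_succ']
      omega
    have h3 : (Q+(m+1-k)) = Q+1+(m-k) := by omega
    rw [h2, h3, h1]
    push_cast
    ring
  have hA : Aaux Q (m+1)
      = (∑ k ∈ range (m+1), (-1:ℚ)^k * ((Q+k).choose k : ℚ) * ((Q+1+(m+1-k)).choose (m+1-k) : ℚ))
        + (-1:ℚ)^(m+1) * ((Q+(m+1)).choose (m+1) : ℚ) := by
    rw [Aaux, sum_range_succ]; simp
  have hS : Saux Q (m+1)
      = (∑ k ∈ range (m+1), (-1:ℚ)^k * ((Q+k).choose k : ℚ) * ((Q+(m+1-k)).choose (m+1-k) : ℚ))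
        + (-1:ℚ)^(m+1) * ((Q+(m+1)).choose (m+1) : ℚ) := by
    rw [Saux, sum_range_succ]; simp
  rw [hA, Finset.sum_congr rfl key, Finset.sum_add_distrib, hS, Aaux]
  ring

lemma Saux_rec (Q m : ℕ) : Saux (Q+1) (m+1) = Aaux Q (m+1) - Saux (Q+1) m := by
  have hA : Aaux Q (m+1)
      = (∑ j ∈ range (m+1), (-1:ℚ)^(j+1) * ((Q+(j+1)).choose (j+1) : ℚ) * ((Q+1+(m-j)).choose (m-j) : ℚ))
        + ((Q+1+(m+1)).choose (m+1) : ℚ) := by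
    rw [Aaux, sum_range_succ']
    simp
  have hS : Saux (Q+1) (m+1)
      = (∑ j ∈ range (m+1), (-1:ℚ)^(j+1) * ((Q+1+(j+1)).choose (j+1) : ℚ) * ((Q+1+(m-j)).choose (m-j) : ℚ))
        + ((Q+1+(m+1)).choose (m+1) : ℚ) := by
    rw [Saux, sum_range_succ']
    simp
  have key : ∀ j ∈ range (m+1),
      (-1:ℚ)^(j+1) * ((Q+1+(j+1)).choose (j+1) : ℚ) * ((Q+1+(m-j)).choose (m-j) : ℚ)
      = (-1:ℚ)^(j+1) * ((Q+(j+1)).choose (j+1) : ℚ) * ((Q+1+(m-j)).choose (m-j) : ℚ)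
        - (-1:ℚ)^j * ((Q+1+j).choose j : ℚ) * ((Q+1+(m-j)).choose (m-j) : ℚ) := by
    intro j _
    have h : (Q+1+(j+1)).choose (j+1) = (Q+1+j).choose j + (Q+(j+1)).choose (j+1) := by
      rw [show Q+1+(j+1) = (Q+1+j)+1 by omega, Nat.choose_succ_succ',
        show Q+(j+1) = Q+1+j by omega]
    rw [h]
    push_cast
    ring
  rw [hS, Finset.sum_congr rfl key, Finset.sum_sub_distrib, hA, Saux]
  ring

lemma Saux_step3 (Q m : ℕ) : Saux (Q+1) (m+2) = Saux Q (m+2) + Saux (Q+1) m := by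
  have h1 := Saux_rec Q (m+1)
  have h2 := Saux_rec Q m
  have h3 := Aaux_rec Q (m+1)
  linarith

def Sval (Q m : ℕ) : ℚ := if m % 2 = 0 then ((Q + m/2).choose (m/2) : ℚ) else 0

lemma neg_one_sum (m : ℕ) : ∑ k ∈ range (m+1), (-1:ℚ)^k = if m % 2 = 0 then 1 else 0 := by
  induction m with
  | zero => simp
  | succ m ih =>
    rw [sum_range_succ, ih]
    rcases Nat.mod_two_eq_zero_or_one m with h|h <;>
      simp [h, Nat.add_mod, pow_succ, Odd.neg_one_pow, Even.neg_one_pow,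
        Nat.even_iff, Nat.odd_iff]

lemma Saux_zero (m : ℕ) : Saux 0 m = Sval 0 m := by
  have : Saux 0 m = ∑ k ∈ range (m+1), (-1:ℚ)^k := by
    apply Finset.sum_congr rfl
    intro k _
    simp [Nat.choose_self]
  rw [this, neg_one_sum, Sval]
  rcases Nat.mod_two_eq_zero_or_one m with h|h <;> simp [h, Nat.choose_self]

lemma Saux_eq : ∀ Q m, Saux Q m = Sval Q m
  | 0, m => Saux_zero m
  | Q+1, 0 => by simp [Saux, Sval]
  | Q+1, 1 => by
    have h1 := Saux_rec Q 0
    have h2 := Aaux_rec Q 0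
    have h3 := Saux_eq Q 1
    have e1 : Saux (Q+1) 0 = 1 := by simp [Saux]
    have e2 : Aaux Q 0 = 1 := by simp [Aaux]
    have e3 : Sval Q 1 = 0 := by simp [Sval]
    have e4 : Sval (Q+1) 1 = 0 := by simp [Sval]
    rw [e4]
    rw [e3] at h3
    linarith
  | Q+1, m+2 => by
    rw [Saux_step3, Saux_eq Q (m+2), Saux_eq (Q+1) m]
    have hd : (m+2)/2 = m/2 + 1 := by omega
    have hm : (m+2) % 2 = m % 2 := by omega
    rcases Nat.mod_two_eq_zero_or_one m with h|h
    · have hp : (Q+1+(m/2+1)).choose (m/2+1)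
          = (Q+(m/2+1)).choose (m/2+1) + (Q+1+m/2).choose (m/2) := by
        rw [show Q+1+(m/2+1) = (Q+1+m/2)+1 by omega, Nat.choose_succ_succ',
          show Q+(m/2+1) = Q+1+m/2 by omega]
        omega
      simp only [Sval, hm, h, hd, if_pos, hp]
      push_cast
      ring
    · simp only [Sval, hm, h]
      norm_num

lemma GH_closed (p : ℤ) : ∀ Q m, GH p (Q+1) m
    = ∑ j ∈ Icc 1 m, ((Q+(m-j)).choose (m-j) : ℚ) * (j:ℚ)^(-p)
  | 0, m => by
    rw [GH]
    apply Finset.sum_congr rfl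
    intro k hk
    rw [Finset.mem_Icc] at hk
    rw [GH, if_neg (by omega)]
    simp
  | Q+1, m => by
    rw [GH]
    have step : ∀ k ∈ Icc 1 m, GH p (Q+1) k
        = ∑ j ∈ Icc 1 k, ((Q+(k-j)).choose (k-j) : ℚ) * (j:ℚ)^(-p) :=
      fun k _ => GH_closed p Q k
    rw [Finset.sum_congr rfl step]
    have swap : ∑ k ∈ Icc 1 m, ∑ j ∈ Icc 1 k, ((Q+(k-j)).choose (k-j) : ℚ) * (j:ℚ)^(-p)
        = ∑ j ∈ Icc 1 m, ∑ k ∈ Ico j (m+1), ((Q+(k-j)).choose (k-j) : ℚ) * (j:ℚ)^(-p) := by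
      have := Finset.sum_Ico_Ico_comm 1 (m+1)
        (fun j k => ((Q+(k-j)).choose (k-j) : ℚ) * (j:ℚ)^(-p))
      simp only [← Finset.Ico_add_one_right_eq_Icc] at *
      rw [← this]
    rw [swap]
    apply Finset.sum_congr rfl
    intro j hj
    rw [Finset.mem_Icc] at hj
    rw [Finset.sum_Ico_eq_sum_range]
    have hmj : m + 1 - j = (m - j) + 1 := by omega
    rw [hmj]
    have : ∀ t ∈ range ((m-j)+1),
        ((Q+(j+t-j)).choose (j+t-j) : ℚ) * (j:ℚ)^(-p)
        = ((Q+t).choose t : ℚ) * (j:ℚ)^(-p) := by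
      intro t _
      rw [show j + t - j = t by omega]
    rw [Finset.sum_congr rfl this, ← Finset.sum_mul, hockey]

lemma GH_closed' (p : ℤ) (Q m M : ℕ) (h : m ≤ M) : GH p (Q+1) m
    = ∑ j ∈ Icc 1 M, (if j ≤ m then ((Q+(m-j)).choose (m-j) : ℚ) * (j:ℚ)^(-p) else 0) := by
  rw [GH_closed, ← Finset.sum_filter]
  congr 1
  ext x
  simp only [Finset.mem_filter, Finset.mem_Icc]
  omega

lemma even_sum (n : ℕ) (f : ℕ → ℚ) (hf : ∀ j, j ≤ 2*n → j % 2 = 1 → f j = 0) :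
    ∑ j ∈ Icc 1 (2*n), f j = ∑ i ∈ Icc 1 n, f (2*i) := by
  induction n with
  | zero => simp
  | succ n ih =>
    rw [show 2*(n+1) = (2*n+1)+1 by ring, Finset.sum_Icc_succ_top (by omega),
      Finset.sum_Icc_succ_top (by omega), ih (fun j h1 h2 => hf j (by omega) h2),
      hf (2*n+1) (by omega) (by omega),
      Finset.sum_Icc_succ_top (by omega : 1 ≤ n+1),
      show 2*n+1+1 = 2*(n+1) by ring]
    ring

theorem stmt2 (n p q : ℕ) (hp : 0 < p) (hq : 0 < q) :
    ∑ k ∈ Finset.range (2*n+1), (-1:ℚ)^k * ((q+k-1).choose k : ℚ) * GH (p:ℤ) q (2*n - k)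
      = (1/2^p) * GH (p:ℤ) q n := by
  obtain ⟨Q, rfl⟩ : ∃ Q, q = Q + 1 := ⟨q-1, by omega⟩
  -- Step 1: rewrite each term via indicator closed form
  have step1 : ∀ k ∈ range (2*n+1),
      (-1:ℚ)^k * ((Q+1+k-1).choose k : ℚ) * GH (p:ℤ) (Q+1) (2*n - k)
      = ∑ j ∈ Icc 1 (2*n), (if k ≤ 2*n - j then
          (-1:ℚ)^k * ((Q+k).choose k : ℚ)
            * ((Q+((2*n-j)-k)).choose ((2*n-j)-k) : ℚ) * (j:ℚ)^(-(p:ℤ)) else 0) := by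
    intro k hk
    rw [Finset.mem_range] at hk
    rw [show Q+1+k-1 = Q+k by omega,
      GH_closed' (p:ℤ) Q (2*n-k) (2*n) (by omega), Finset.mul_sum]
    apply Finset.sum_congr rfl
    intro j hj
    rw [Finset.mem_Icc] at hj
    rw [mul_ite, mul_zero]
    by_cases hc : j ≤ 2*n - k
    · rw [if_pos hc, if_pos (by omega), show 2*n-k-j = (2*n-j)-k by omega]
      ring
    · rw [if_neg hc, if_neg (by omega)]
  rw [Finset.sum_congr rfl step1, Finset.sum_comm]
  -- Step 2: inner sum is Saux
  have step2 : ∀ j ∈ Icc 1 (2*n),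
      (∑ k ∈ range (2*n+1), if k ≤ 2*n - j then
          (-1:ℚ)^k * ((Q+k).choose k : ℚ)
            * ((Q+((2*n-j)-k)).choose ((2*n-j)-k) : ℚ) * (j:ℚ)^(-(p:ℤ)) else 0)
      = Sval Q (2*n-j) * (j:ℚ)^(-(p:ℤ)) := by
    intro j hj
    rw [Finset.mem_Icc] at hj
    rw [← Finset.sum_filter,
      show (range (2*n+1)).filter (fun k => k ≤ 2*n - j) = range ((2*n-j)+1) from by
        ext x; simp only [Finset.mem_filter, Finset.mem_range]; omega,
      ← Saux_eq, Saux, Finset.sum_mul]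
  rw [Finset.sum_congr rfl step2]
  -- Step 3: only even j survive; reindex j = 2i
  rw [even_sum n _ (by
    intro j hle hj
    rw [Sval, if_neg (by omega), zero_mul])]
  -- Step 4: evaluate at even points and match RHS
  have step4 : ∀ i ∈ Icc 1 n,
      Sval Q (2*n - 2*i) * ((2*i : ℕ):ℚ)^(-(p:ℤ))
      = (2:ℚ)^(-(p:ℤ)) * (((Q+(n-i)).choose (n-i) : ℚ) * (i:ℚ)^(-(p:ℤ))) := by
    intro i hi
    rw [Finset.mem_Icc] at hi
    rw [Sval, if_pos (by omega), show (2*n-2*i)/2 = n - i by omega]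
    push_cast
    rw [mul_zpow]
    ring
  rw [Finset.sum_congr rfl step4, ← Finset.mul_sum, GH_closed,
    show (1:ℚ)/2^p = (2:ℚ)^(-(p:ℤ)) from by
      rw [zpow_neg, zpow_natCast, one_div]]
end

section
/- For all nonnegative integers n and positive integers p, q: H_n^{(p,q+1)} = sum_{k=0}^n (-1)^k * binomial(p-q, k) * H_{n-k}^{(p,p+1)}, where binomial(p-q,k) is the (possibly negative upper argument) binomial coefficient and H_n^{(p,r)} are the generalized hyperharmonic numbers. -/
open Finset

lemma binomZ_zero (x : ℤ) : binomZ x 0 = 1 := by simp [binomZ]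

lemma binomZ_pascal (x : ℤ) (k : ℕ) :
    binomZ (x+1) (k+1) = binomZ x (k+1) + binomZ x k := by
  unfold binomZ
  have h1 : ∏ i ∈ Finset.range (k+1), (((x+1:ℤ):ℚ) - i)
      = (∏ i ∈ Finset.range k, ((x:ℚ) - i)) * ((x:ℚ)+1) := by
    rw [Finset.prod_range_succ']
    push_cast
    simp [add_sub_add_right_eq_sub]
  have h2 : ∏ i ∈ Finset.range (k+1), ((x:ℚ) - i)
      = (∏ i ∈ Finset.range k, ((x:ℚ) - i)) * ((x:ℚ) - k) := Finset.prod_range_succ _ _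
  rw [h1, h2, Nat.factorial_succ]
  have hk : ((Nat.factorial k : ℚ)) ≠ 0 := by exact_mod_cast (Nat.factorial_pos k).ne'
  have hk1 : ((k:ℚ)+1) ≠ 0 := by positivity
  field_simp
  push_cast
  ring

lemma binomZ_zero_left (k : ℕ) : binomZ 0 (k+1) = 0 := by
  unfold binomZ
  rw [Finset.prod_eq_zero (Finset.mem_range.mpr (Nat.succ_pos k))]
  · simp
  · simp

lemma GH_succ (p : ℤ) (r m : ℕ) :
    GH p (r+1) (m+1) = GH p (r+1) m + GH p r (m+1) := by
  show (∑ k ∈ Finset.Icc 1 (m+1), GH p r k) = (∑ k ∈ Finset.Icc 1 m, GH p r k) + _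
  rw [← Finset.sum_Icc_succ_top (by omega : 1 ≤ m+1)]

lemma GH_zero' (p : ℤ) (r : ℕ) : GH p r 0 = 0 := by
  cases r <;> simp [GH]

def Fp (p : ℕ) (u : ℤ) (n : ℕ) : ℚ :=
  ∑ k ∈ Finset.range (n+1), (-1:ℚ)^k * binomZ u k * GH (p:ℤ) (p+1) (n-k)

lemma Fp_zero (p : ℕ) (u : ℤ) : Fp p u 0 = 0 := by
  simp [Fp, binomZ_zero, GH_zero']

lemma Fp_u_zero (p n : ℕ) : Fp p 0 n = GH (p:ℤ) (p+1) n := by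
  unfold Fp
  rw [Finset.sum_eq_single 0]
  · simp [binomZ_zero]
  · intro k hk hk0
    obtain ⟨j, rfl⟩ := Nat.exists_eq_succ_of_ne_zero hk0
    simp [binomZ_zero_left]
  · simp

lemma Fp_rec (p : ℕ) (u : ℤ) (m : ℕ) :
    Fp p (u+1) (m+1) = Fp p u (m+1) - Fp p u m := by
  unfold Fp
  rw [Finset.sum_range_succ' (fun k => (-1:ℚ)^k * binomZ (u+1) k * GH (p:ℤ) (p+1) (m+1-k)),
      Finset.sum_range_succ' (fun k => (-1:ℚ)^k * binomZ u k * GH (p:ℤ) (p+1) (m+1-k))]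
  have : ∀ k ∈ Finset.range (m+1),
      (-1:ℚ)^(k+1) * binomZ (u+1) (k+1) * GH (p:ℤ) (p+1) (m+1-(k+1))
      = (-1:ℚ)^(k+1) * binomZ u (k+1) * GH (p:ℤ) (p+1) (m+1-(k+1))
        - (-1:ℚ)^k * binomZ u k * GH (p:ℤ) (p+1) (m-k) := by
    intro k _
    rw [binomZ_pascal]
    have : m + 1 - (k+1) = m - k := by omega
    rw [this]
    ring
  rw [Finset.sum_congr rfl this, Finset.sum_sub_distrib]
  simp [binomZ_zero]
  ring

lemma main (p : ℕ) : ∀ q n, GH (p:ℤ) (q+1) n = Fp p ((p:ℤ) - (q:ℤ)) n := by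
  -- P p : base
  have base : ∀ n, GH (p:ℤ) (p+1) n = Fp p ((p:ℤ) - (p:ℤ)) n := by
    intro n; rw [sub_self, Fp_u_zero]
  have up : ∀ q, (∀ n, GH (p:ℤ) (q+1) n = Fp p ((p:ℤ) - (q:ℤ)) n) →
      ∀ n, GH (p:ℤ) (q+1+1) n = Fp p ((p:ℤ) - (q+1:ℤ)) n := by
    intro q h n
    induction n with
    | zero => rw [GH_zero', Fp_zero]
    | succ m ih =>
      have hrec : Fp p ((p:ℤ) - q) (m+1) = Fp p ((p:ℤ) - (q+1)) (m+1) - Fp p ((p:ℤ) - (q+1)) m := by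
        have := Fp_rec p ((p:ℤ) - (q+1)) m
        rw [show (p:ℤ) - (q+1) + 1 = (p:ℤ) - q by ring] at this
        linarith [this]
      rw [GH_succ, ih, h (m+1), hrec]
      ring
  have down : ∀ q, (∀ n, GH (p:ℤ) (q+1+1) n = Fp p ((p:ℤ) - (q+1:ℤ)) n) →
      ∀ n, GH (p:ℤ) (q+1) n = Fp p ((p:ℤ) - (q:ℤ)) n := by
    intro q h n
    cases n with
    | zero => rw [GH_zero', Fp_zero]
    | succ m =>
      have hrec := Fp_rec p ((p:ℤ) - (q+1)) m
      rw [show (p:ℤ) - (q+1) + 1 = (p:ℤ) - q by ring] at hrec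
      rw [hrec, ← h (m+1), ← h m]
      have := GH_succ (p:ℤ) (q+1) m
      linarith [this]
  -- now all q
  intro q
  rcases le_or_gt q p with hle | hlt
  · -- descending from p: prove ∀ j ≤ p, P (p-j)
    have : ∀ j, j ≤ p → ∀ n, GH (p:ℤ) (p-j+1) n = Fp p ((p:ℤ) - ((p-j : ℕ):ℤ)) n := by
      intro j
      induction j with
      | zero => intro _ n; simpa using base n
      | succ i ih =>
        intro hi n
        have hi' : i ≤ p := by omega
        have heq : p - (i+1) + 1 = p - i := by omega
        have hc : ((p - (i+1) : ℕ):ℤ) + 1 = ((p - i : ℕ):ℤ) := by omega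
        have ih' := ih hi'
        rw [← hc, ← heq] at ih'
        exact down (p - (i+1)) ih' n
    have := this (p - q) (by omega)
    rwa [show p - (p - q) = q by omega] at this
  · have : ∀ j, ∀ n, GH (p:ℤ) (p+j+1) n = Fp p ((p:ℤ) - ((p+j : ℕ):ℤ)) n := by
      intro j
      induction j with
      | zero => intro n; simpa using base n
      | succ i ih =>
        intro n
        have key := up (p + i) ih n
        have h1 : (p + (i+1) : ℕ) = (p + i) + 1 := by omega
        have h2 : (((p + i + 1) : ℕ):ℤ) = ((p + i : ℕ):ℤ) + 1 := by omega
        rw [h1, h2]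
        exact key
    have := this (q - p)
    rwa [show p + (q - p) = q by omega] at this

theorem stmt3 (n p q : ℕ) (hp : 0 < p) (hq : 0 < q) :
    GH (p:ℤ) (q+1) n
      = ∑ k ∈ Finset.range (n+1), (-1:ℚ)^k * binomZ ((p:ℤ) - (q:ℤ)) k * GH (p:ℤ) (p+1) (n-k) := by
  exact main p q n
end

section
/- For all positive integers n and nonnegative integers p, q, the generalized hyperharmonic number with negative first index equals the hyper-sum: H_n^{(-p, q+1)} = S_p^{(q)}(n), where S_p^{(q)}(n) is the q-fold iterated sum of p-th powers. -/
open Finset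

theorem stmt4 (n p q : ℕ) (hn : 0 < n) :
    GH (-(p:ℤ)) (q+1) n = (hS p q n : ℚ) := by
  induction q generalizing n with
  | zero =>
      show ∑ k ∈ Finset.Icc 1 n, GH (-(p:ℤ)) 0 k = _
      rw [hS, Nat.cast_sum]
      refine Finset.sum_congr rfl fun k hk => ?_
      have hk1 : k ≠ 0 := by
        have := (Finset.mem_Icc.mp hk).1; omega
      simp [GH, hk1]
  | succ q ih =>
      show ∑ k ∈ Finset.Icc 1 n, GH (-(p:ℤ)) (q+1) k = _
      rw [hS, Nat.cast_sum]
      refine Finset.sum_congr rfl fun k hk => ?_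
      exact ih k (by have := (Finset.mem_Icc.mp hk).1; omega)
end

section
/- For all positive integers n, p and nonnegative integers q: S_p^{(q)}(n) = sum_{j=0}^p j! * S(p+1, j+1) * binomial(n+q, j+q+1), where S(a,b) denotes the Stirling number of the second kind. -/
open Finset

lemma stirling2_eq_zero : ∀ n k, n < k → stirling2 n k = 0 := by
  intro n
  induction n with
  | zero =>
    intro k hk
    cases k with
    | zero => omega
    | succ k => rfl
  | succ n ih =>
    intro k hk
    cases k with
    | zero => omega
    | succ k =>
      simp only [stirling2]
      rw [ih (k+1) (by omega), ih k (by omega)]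
      ring

lemma stirling2_zero_right (n : ℕ) : stirling2 (n+1) 0 = 0 := rfl

lemma lemB : ∀ p m, (m+1)^p = ∑ j ∈ Finset.range (p+1),
    Nat.factorial j * stirling2 (p+1) (j+1) * m.choose j := by
  intro p
  induction p with
  | zero => intro m; simp [stirling2]
  | succ p ih =>
    intro m
    have step : ∀ j, (m+1) * (Nat.factorial j * stirling2 (p+1) (j+1) * m.choose j)
        = Nat.factorial (j+1) * stirling2 (p+1) (j+1) * m.choose j
          + Nat.factorial (j+1) * stirling2 (p+1) (j+1) * m.choose (j+1) := by
      intro j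
      have h1 : (m+1) * m.choose j = (m+1).choose (j+1) * (j+1) := Nat.add_one_mul_choose_eq m j
      have h2 : (m+1).choose (j+1) = m.choose j + m.choose (j+1) := Nat.choose_succ_succ m j
      calc (m+1) * (Nat.factorial j * stirling2 (p+1) (j+1) * m.choose j)
          = Nat.factorial j * stirling2 (p+1) (j+1) * ((m+1) * m.choose j) := by ring
        _ = Nat.factorial j * stirling2 (p+1) (j+1)
              * ((m.choose j + m.choose (j+1)) * (j+1)) := by rw [h1, h2]
        _ = _ := by rw [Nat.factorial_succ]; ring
    have expand : ∀ j, Nat.factorial j * stirling2 (p+2) (j+1) * m.choose j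
        = Nat.factorial (j+1) * stirling2 (p+1) (j+1) * m.choose j
          + Nat.factorial j * stirling2 (p+1) j * m.choose j := by
      intro j
      have : stirling2 (p+2) (j+1) = (j+1) * stirling2 (p+1) (j+1) + stirling2 (p+1) j := rfl
      rw [this, Nat.factorial_succ]; ring
    calc (m+1)^(p+1) = (m+1) * (m+1)^p := by ring
      _ = ∑ j ∈ Finset.range (p+1),
            (m+1) * (Nat.factorial j * stirling2 (p+1) (j+1) * m.choose j) := by
          rw [ih, Finset.mul_sum]
      _ = ∑ j ∈ Finset.range (p+1), (Nat.factorial (j+1) * stirling2 (p+1) (j+1) * m.choose j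
            + Nat.factorial (j+1) * stirling2 (p+1) (j+1) * m.choose (j+1)) :=
          Finset.sum_congr rfl (fun j _ => step j)
      _ = (∑ j ∈ Finset.range (p+1), Nat.factorial (j+1) * stirling2 (p+1) (j+1) * m.choose j)
            + ∑ j ∈ Finset.range (p+1),
                Nat.factorial (j+1) * stirling2 (p+1) (j+1) * m.choose (j+1) := by
          rw [Finset.sum_add_distrib]
      _ = ∑ j ∈ Finset.range (p+2), Nat.factorial j * stirling2 (p+2) (j+1) * m.choose j := by
          rw [Finset.sum_congr rfl (fun j _ => expand j), Finset.sum_add_distrib]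
          congr 1
          · rw [Finset.sum_range_succ
                (fun j => Nat.factorial (j+1) * stirling2 (p+1) (j+1) * m.choose j) (p+1),
              stirling2_eq_zero (p+1) (p+2) (by omega)]
            simp
          · rw [Finset.sum_range_succ' (fun j => Nat.factorial j * stirling2 (p+1) j * m.choose j)]
            simp [stirling2_zero_right]

lemma lemC (p : ℕ) : ∀ n, hS p 0 n = ∑ j ∈ Finset.range (p+1),
    Nat.factorial j * stirling2 (p+1) (j+1) * n.choose (j+1) := by
  intro n
  induction n with
  | zero => simp [hS]
  | succ n ih =>
    have h1 : hS p 0 (n+1) = hS p 0 n + (n+1)^p := by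
      simp only [hS]
      rw [Finset.sum_Icc_succ_top (by omega : 1 ≤ n+1)]
    rw [h1, ih, lemB p n, ← Finset.sum_add_distrib]
    refine Finset.sum_congr rfl (fun j _ => ?_)
    rw [Nat.choose_succ_succ (n) (j)]
    ring

theorem stmt6 (n p q : ℕ) (hn : 0 < n) (hp : 0 < p) :
    hS p q n = ∑ j ∈ Finset.range (p+1),
      Nat.factorial j * stirling2 (p+1) (j+1) * (n+q).choose (j+q+1) := by
  clear hn hp
  induction q generalizing n with
  | zero => simpa using lemC p n
  | succ q ih =>
    have hsum : ∀ r m, (∑ k ∈ Finset.Icc 1 m, (k+q).choose (r+q+1))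
        = (m+q+1).choose (r+q+2) := by
      intro r m
      induction m with
      | zero => simp [Nat.choose_eq_zero_of_lt (by omega : q+1 < r+q+2)]
      | succ m ihm =>
        rw [Finset.sum_Icc_succ_top (by omega : 1 ≤ m+1), ihm]
        have hp2 : (m+1+q+1).choose (r+q+2)
            = (m+q+1).choose (r+q+1) + (m+q+1).choose (r+q+2) := by
          rw [show m+1+q+1 = (m+q+1)+1 from by omega,
            show r+q+2 = (r+q+1)+1 from by omega]
          exact Nat.choose_succ_succ (m+q+1) (r+q+1)
        have he : m+1+q = m+q+1 := by omega
        rw [he] at hp2 ⊢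
        omega
    calc hS p (q+1) n = ∑ k ∈ Finset.Icc 1 n, hS p q k := by simp [hS]
      _ = ∑ k ∈ Finset.Icc 1 n, ∑ j ∈ Finset.range (p+1),
            Nat.factorial j * stirling2 (p+1) (j+1) * (k+q).choose (j+q+1) :=
          Finset.sum_congr rfl (fun k _ => ih k)
      _ = ∑ j ∈ Finset.range (p+1), ∑ k ∈ Finset.Icc 1 n,
            Nat.factorial j * stirling2 (p+1) (j+1) * (k+q).choose (j+q+1) :=
          Finset.sum_comm
      _ = ∑ j ∈ Finset.range (p+1),
            Nat.factorial j * stirling2 (p+1) (j+1) * (n+(q+1)).choose (j+(q+1)+1) := by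
          refine Finset.sum_congr rfl (fun j _ => ?_)
          rw [← Finset.mul_sum, hsum j n]
          congr 1 <;> omega
end

section
/- For all positive integers n and p: S_p(n) = (1/2^p) * sum_{k=0}^{2n} (-1)^k * S_p(k), where S_p(m) = sum_{j=1}^m j^p is the sum of p-th powers. -/
open Finset

lemma hS_succ (p m : ℕ) : hS p 0 (m+1) = hS p 0 m + (m+1)^p := by
  simp [hS, Finset.sum_Icc_succ_top (Nat.le_add_left 1 m)]

lemma key (p n : ℕ) :
    ∑ k ∈ Finset.range (2*n+1), (-1:ℚ)^k * (hS p 0 k : ℚ) = 2^p * (hS p 0 n : ℚ) := by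
  induction n with
  | zero => simp [hS]
  | succ n ih =>
      have h1 : 2*(n+1)+1 = (2*n+1)+1+1 := by ring
      rw [h1, Finset.sum_range_succ, Finset.sum_range_succ, ih]
      have h2 : hS p 0 (2*n+1+1) = hS p 0 (2*n+1) + (2*n+2)^p := by
        have := hS_succ p (2*n+1); simpa using this
      have h3 : hS p 0 (n+1) = hS p 0 n + (n+1)^p := hS_succ p n
      have hodd : (-1:ℚ)^(2*n+1) = -1 := by
        rw [pow_succ, pow_mul]; norm_num
      have heven : (-1:ℚ)^(2*n+1+1) = 1 := by
        rw [pow_succ, hodd]; norm_num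
      rw [hodd, heven, h2, h3]
      push_cast
      have : ((2:ℚ)*n+2)^p = 2^p * ((n:ℚ)+1)^p := by
        rw [← mul_pow]; ring_nf
      rw [this]; ring

theorem stmt8 (n p : ℕ) (hn : 0 < n) (hp : 0 < p) :
    (hS p 0 n : ℚ) = (1/2^p) * ∑ k ∈ Finset.range (2*n+1), (-1:ℚ)^k * (hS p 0 k : ℚ) := by
  rw [key]
  have : (2:ℚ)^p ≠ 0 := by positivity
  field_simp
end

section
/- For all positive integers n and q: sum_{j=1}^q ((-1)^j / j) * binomial(n, j) * binomial(n+q-j, n) = binomial(n+q, q) * (H_{n+q} - H_q - H_n), where H_m is the m-th harmonic number. -/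
open Finset

def Ssum (n m : ℕ) : ℚ :=
  ∑ j ∈ range (m+1), (-1:ℚ)^j * ((n+1).choose j : ℚ) * ((n+m-j).choose n : ℚ)

lemma Ssum_zero (n : ℕ) : Ssum n 0 = 1 := by simp [Ssum]

lemma Ssum_rec (n m : ℕ) :
    Ssum (n+1) (m+1) = Ssum (n+1) m + Ssum n (m+1) - Ssum n m := by
  have h1 : Ssum (n+1) (m+1)
      = ∑ j ∈ range (m+2), ((-1:ℚ)^j * ((n+2).choose j : ℚ) * ((n+m+1-j).choose (n+1) : ℚ)
          + (-1:ℚ)^j * ((n+2).choose j : ℚ) * ((n+m+1-j).choose n : ℚ)) := by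
    rw [Ssum]
    refine Finset.sum_congr rfl fun j hj => ?_
    have he : n + 1 + (m+1) - j = (n + m + 1 - j) + 1 := by
      have : j ≤ m + 1 := by simpa [Nat.lt_succ_iff] using hj
      omega
    rw [he, Nat.choose_succ_succ]
    push_cast
    ring
  rw [h1, Finset.sum_add_distrib]
  have h2 : ∑ j ∈ range (m+2), (-1:ℚ)^j * ((n+2).choose j : ℚ) * ((n+m+1-j).choose (n+1) : ℚ)
      = Ssum (n+1) m := by
    rw [Finset.sum_range_succ]
    have hz : ((n+m+1-(m+1)).choose (n+1) : ℚ) = 0 := by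
      have he : n+m+1-(m+1) = n := by omega
      rw [he]
      exact_mod_cast congrArg (Nat.cast (R := ℚ)) (Nat.choose_eq_zero_of_lt (Nat.lt_succ_self n))
    rw [hz, mul_zero, add_zero, Ssum]
    refine Finset.sum_congr rfl fun j hj => ?_
    have he : n + 1 + m - j = n + m + 1 - j := by omega
    rw [he]
  have hP : ∑ k ∈ range (m+1), (-1:ℚ)^(k+1) * ((n+1).choose (k+1) : ℚ) * ((n+m-k).choose n : ℚ)
      = Ssum n (m+1) - ((n+m+1).choose n : ℚ) := by
    have h6 : Ssum n (m+1)
        = ∑ k ∈ range (m+1), (-1:ℚ)^(k+1) * ((n+1).choose (k+1) : ℚ) * ((n+(m+1)-(k+1)).choose n : ℚ)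
          + (-1:ℚ)^0 * ((n+1).choose 0 : ℚ) * ((n+(m+1)-0).choose n : ℚ) := by
      rw [Ssum]
      exact Finset.sum_range_succ' _ (m+1)
    rw [h6]
    have he : ∀ k, n + (m+1) - (k+1) = n + m - k := fun k => by omega
    simp only [he]
    have he2 : n+(m+1) = n+m+1 := rfl
    rw [he2]
    simp
  have h3 : ∑ j ∈ range (m+2), (-1:ℚ)^j * ((n+2).choose j : ℚ) * ((n+m+1-j).choose n : ℚ)
      = Ssum n (m+1) - ((n+m+1).choose n : ℚ) - Ssum n m + ((n+m+1).choose n : ℚ) := by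
    rw [Finset.sum_range_succ' (fun j => (-1:ℚ)^j * ((n+2).choose j : ℚ) * ((n+m+1-j).choose n : ℚ))]
    have h5 : ∑ k ∈ range (m+1), (-1:ℚ)^(k+1) * ((n+2).choose (k+1) : ℚ) * ((n+m+1-(k+1)).choose n : ℚ)
        = ∑ k ∈ range (m+1), ((-1:ℚ)^(k+1) * ((n+1).choose (k+1) : ℚ) * ((n+m-k).choose n : ℚ)
            - (-1:ℚ)^k * ((n+1).choose k : ℚ) * ((n+m-k).choose n : ℚ)) := by
      refine Finset.sum_congr rfl fun k hk => ?_
      have he : n + m + 1 - (k+1) = n + m - k := by omega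
      rw [he, Nat.choose_succ_succ]
      push_cast
      ring
    rw [h5, Finset.sum_sub_distrib, hP]
    have hq : ∑ k ∈ range (m+1), (-1:ℚ)^k * ((n+1).choose k : ℚ) * ((n+m-k).choose n : ℚ) = Ssum n m := rfl
    rw [hq]
    simp
  rw [h2, h3]
  ring

lemma Ssum_succ_eq_zero (n m : ℕ) : Ssum n (m+1) = 0 := by
  induction n generalizing m with
  | zero =>
    induction m with
    | zero => simp [Ssum, Finset.sum_range_succ]
    | succ m ih =>
      rw [Ssum, Finset.sum_range_succ]
      rw [Ssum] at ih
      simp only [Nat.choose_zero_right, Nat.cast_one, mul_one] at ih ⊢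
      rw [ih]
      have hz : ((0+1:ℕ).choose (m+2) : ℚ) = 0 := by
        exact_mod_cast congrArg (Nat.cast (R := ℚ)) (Nat.choose_eq_zero_of_lt (by omega))
      rw [hz]
      ring
  | succ n ih =>
    induction m with
    | zero =>
      have h := Ssum_rec n 0
      rw [ih 0, Ssum_zero, Ssum_zero] at h
      linarith
    | succ m ihm =>
      have h := Ssum_rec n (m+1)
      rw [ih (m+1), ih m, ihm] at h
      linarith

def Lsum (n q : ℕ) : ℚ :=
  ∑ k ∈ range q, (-1:ℚ)^(k+1) / (k+1 : ℚ) * (n.choose (k+1) : ℚ) * ((n+q-(k+1)).choose n : ℚ)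

lemma Lsum_rec (n q : ℕ) :
    Lsum (n+1) (q+1) = Lsum (n+1) q + Lsum n (q+1) - ((n+q+1).choose n : ℚ)/(n+1) := by
  have h1 : Lsum (n+1) (q+1)
      = ∑ k ∈ range (q+1), ((-1:ℚ)^(k+1) / (k+1:ℚ) * ((n+1).choose (k+1) : ℚ) * ((n+q-k).choose (n+1) : ℚ)
          + (-1:ℚ)^(k+1) / (k+1:ℚ) * ((n+1).choose (k+1) : ℚ) * ((n+q-k).choose n : ℚ)) := by
    rw [Lsum]
    refine Finset.sum_congr rfl fun k hk => ?_
    have he : n + 1 + (q+1) - (k+1) = (n + q - k) + 1 := by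
      have : k ≤ q := by simpa [Nat.lt_succ_iff] using hk
      omega
    rw [he, Nat.choose_succ_succ (n+q-k) n]
    push_cast
    ring
  rw [h1, Finset.sum_add_distrib]
  have h2 : ∑ k ∈ range (q+1), (-1:ℚ)^(k+1) / (k+1:ℚ) * ((n+1).choose (k+1) : ℚ) * ((n+q-k).choose (n+1) : ℚ)
      = Lsum (n+1) q := by
    rw [Finset.sum_range_succ]
    have hz : ((n+q-q).choose (n+1) : ℚ) = 0 := by
      have he : n+q-q = n := by omega
      rw [he]
      exact_mod_cast congrArg (Nat.cast (R := ℚ)) (Nat.choose_eq_zero_of_lt (Nat.lt_succ_self n))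
    rw [hz, mul_zero, add_zero, Lsum]
    refine Finset.sum_congr rfl fun k hk => ?_
    have he : n + 1 + q - (k+1) = n + q - k := by omega
    rw [he]
  have hkey : ∑ k ∈ range (q+1), (-1:ℚ)^(k+1) * ((n+1).choose (k+1) : ℚ) * ((n+q-k).choose n : ℚ)
      = -(((n+q+1).choose n : ℚ)) := by
    have h6 : Ssum n (q+1)
        = ∑ k ∈ range (q+1), (-1:ℚ)^(k+1) * ((n+1).choose (k+1) : ℚ) * ((n+(q+1)-(k+1)).choose n : ℚ)
          + (-1:ℚ)^0 * ((n+1).choose 0 : ℚ) * ((n+(q+1)-0).choose n : ℚ) := by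
      rw [Ssum]
      exact Finset.sum_range_succ' _ (q+1)
    rw [Ssum_succ_eq_zero] at h6
    have he : ∀ k : ℕ, n + (q+1) - (k+1) = n + q - k := fun k => by omega
    simp only [he] at h6
    have he2 : n+(q+1) = n+q+1 := rfl
    rw [he2] at h6
    simp only [pow_zero, Nat.choose_zero_right, Nat.cast_one, one_mul, Nat.sub_zero] at h6
    linarith
  have h3 : ∑ k ∈ range (q+1), (-1:ℚ)^(k+1) / (k+1:ℚ) * ((n+1).choose (k+1) : ℚ) * ((n+q-k).choose n : ℚ)
      = Lsum n (q+1) - ((n+q+1).choose n : ℚ)/(n+1) := by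
    have h5 : ∀ k ∈ range (q+1), (-1:ℚ)^(k+1) / (k+1:ℚ) * ((n+1).choose (k+1) : ℚ) * ((n+q-k).choose n : ℚ)
        = (-1:ℚ)^(k+1) / (k+1:ℚ) * ((n).choose (k+1) : ℚ) * ((n+q-k).choose n : ℚ)
          + (1/(n+1:ℚ)) * ((-1:ℚ)^(k+1) * ((n+1).choose (k+1) : ℚ) * ((n+q-k).choose n : ℚ)) := by
      intro k _
      have habs : ((n:ℚ)+1) * (n.choose k : ℚ) = ((n+1).choose (k+1) : ℚ) * ((k:ℚ)+1) := by
        exact_mod_cast congrArg (Nat.cast (R := ℚ)) (Nat.add_one_mul_choose_eq n k)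
      have hsplit : ((n+1).choose (k+1) : ℚ) = (n.choose k : ℚ) + (n.choose (k+1) : ℚ) := by
        exact_mod_cast congrArg (Nat.cast (R := ℚ)) (Nat.choose_succ_succ n k)
      have hk1 : ((k:ℚ)+1) ≠ 0 := by positivity
      have hn1 : ((n:ℚ)+1) ≠ 0 := by positivity
      have hco : (n.choose k : ℚ)/((k:ℚ)+1) = ((n+1).choose (k+1) : ℚ)/((n:ℚ)+1) := by
        rw [div_eq_div_iff hk1 hn1]
        linear_combination habs
      linear_combination ((-1:ℚ)^(k+1) * ((n+q-k).choose n : ℚ)) * hco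
        + ((-1:ℚ)^(k+1) * ((n+q-k).choose n : ℚ)/((k:ℚ)+1)) * hsplit
    rw [Finset.sum_congr rfl h5, Finset.sum_add_distrib, ← Finset.mul_sum, hkey]
    have h7 : ∑ k ∈ range (q+1), (-1:ℚ)^(k+1) / (k+1:ℚ) * ((n).choose (k+1) : ℚ) * ((n+q-k).choose n : ℚ)
        = Lsum n (q+1) := by
      rw [Lsum]
      refine Finset.sum_congr rfl fun k hk => ?_
      have he : n + (q+1) - (k+1) = n + q - k := by omega
      rw [he]
    rw [h7]
    ring
  rw [h2, h3]
  ring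

def Gq (n q : ℕ) : ℚ := ((n+q).choose q : ℚ) * (harmonic' (n+q) - harmonic' q - harmonic' n)

lemma harmonic'_succ (m : ℕ) : harmonic' (m+1) = harmonic' m + 1/((m:ℚ)+1) :=
  Finset.sum_range_succ _ m

lemma Gq_rec (n q : ℕ) :
    Gq (n+1) (q+1) = Gq (n+1) q + Gq n (q+1) - ((n+q+1).choose n : ℚ)/(n+1) := by
  have hp : ((n+q+2).choose (q+1) : ℚ) = ((n+q+1).choose q : ℚ) + ((n+q+1).choose (q+1) : ℚ) := by
    exact_mod_cast congrArg (Nat.cast (R := ℚ)) (Nat.choose_succ_succ (n+q+1) q)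
  have hr : ((n+q+1).choose (q+1) : ℚ) * ((q:ℚ)+1) = ((n+q+1).choose q : ℚ) * ((n:ℚ)+1) := by
    have h := Nat.choose_succ_right_eq (n+q+1) q
    have he : n+q+1-q = n+1 := by omega
    rw [he] at h
    exact_mod_cast congrArg (Nat.cast (R := ℚ)) h
  have hs : ((n+q+1).choose n : ℚ) = ((n+q+1).choose (q+1) : ℚ) := by
    have h := Nat.choose_symm (show q+1 ≤ n+q+1 by omega)
    have he : n+q+1-(q+1) = n := by omega
    rw [he] at h
    exact_mod_cast congrArg (Nat.cast (R := ℚ)) h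
  have hT : ((n:ℚ)+(q:ℚ)+2) ≠ 0 := by positivity
  have hQ : ((q:ℚ)+1) ≠ 0 := by positivity
  have hN : ((n:ℚ)+1) ≠ 0 := by positivity
  have key : ((n+q+1).choose q : ℚ) * (1/((n:ℚ)+(q:ℚ)+2)) - ((n+q+1).choose q : ℚ) * (1/((q:ℚ)+1))
      + ((n+q+1).choose (q+1) : ℚ) * (1/((n:ℚ)+(q:ℚ)+2)) = 0 := by
    field_simp
    linear_combination hr
  simp only [Gq, show (n+1)+(q+1) = (n+q+1)+1 from by omega, show (n+1)+q = n+q+1 from by omega,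
    show n+(q+1) = n+q+1 from by omega, harmonic'_succ]
  push_cast
  rw [show ((n:ℚ)+(q:ℚ)+1)+1 = (n:ℚ)+(q:ℚ)+2 from by ring] at *
  rw [show ((n+q+1+1).choose (q+1) : ℚ) = ((n+q+2).choose (q+1) : ℚ) from by norm_num]
  rw [hp, hs]
  linear_combination key

lemma Lsum_zero_left (q : ℕ) : Lsum 0 q = 0 := by
  simp [Lsum, Nat.choose_zero_succ]

lemma Lsum_zero_right (n : ℕ) : Lsum n 0 = 0 := by
  simp [Lsum]

lemma Gq_zero_left (q : ℕ) : Gq 0 q = 0 := by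
  have h0 : harmonic' 0 = 0 := rfl
  simp [Gq, h0]

lemma Gq_zero_right (n : ℕ) : Gq n 0 = 0 := by
  have h0 : harmonic' 0 = 0 := rfl
  simp [Gq, h0]

lemma main_identity (n q : ℕ) : Lsum n q = Gq n q := by
  induction n generalizing q with
  | zero => rw [Lsum_zero_left, Gq_zero_left]
  | succ n ih =>
    induction q with
    | zero => rw [Lsum_zero_right, Gq_zero_right]
    | succ q ihq =>
      rw [Lsum_rec, Gq_rec, ih (q+1), ihq]

theorem stmt10 (n q : ℕ) (hn : 0 < n) (hq : 0 < q) :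
    ∑ j ∈ Finset.Icc 1 q, ((-1:ℚ)^j / (j:ℚ)) * (n.choose j : ℚ) * ((n+q-j).choose n : ℚ)
      = ((n+q).choose q : ℚ) * (harmonic' (n+q) - harmonic' q - harmonic' n) := by
  have hL : ∑ j ∈ Finset.Icc 1 q, ((-1:ℚ)^j / (j:ℚ)) * (n.choose j : ℚ) * ((n+q-j).choose n : ℚ)
      = Lsum n q := by
    rw [show Finset.Icc 1 q = Finset.Ico 1 (q+1) from rfl, Finset.sum_Ico_eq_sum_range]
    rw [show q + 1 - 1 = q from rfl, Lsum]
    refine Finset.sum_congr rfl fun k hk => ?_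
    have he : 1 + k = k + 1 := by omega
    rw [he]
    push_cast
    ring
  rw [hL, main_identity]
  rfl
end

section
/- For all positive integers n, q with q ≤ n: the sum of powers satisfies S_q(n) = sum_{k=0}^q (-1)^k * S_{n+1}(q+n+1, k+n+1) * binomial(k+n, k+1) * k!, where S_r(a+r, b+r) is the r-Stirling number of the second kind with r = n+1. -/
open Finset

private lemma rstirling2_zero_of_lt (r : ℕ) : ∀ q k : ℕ, q < k → rstirling2 r q k = 0 := by
  intro q
  induction q with
  | zero =>
    intro k hk
    match k, hk with
    | k+1, _ => rfl
  | succ q ih =>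
    intro k hk
    match k, hk with
    | k+1, hk =>
      show (k+1+r) * rstirling2 r q (k+1) + rstirling2 r q k = 0
      rw [ih (k+1) (by omega), ih k (by omega)]
      ring

private lemma hockey_s14 (m : ℕ) : ∀ n : ℕ,
    ∑ i ∈ Finset.range n, (i+m).choose m = (n+m).choose (m+1) := by
  intro n
  induction n with
  | zero => simp [Nat.choose_eq_zero_of_lt]
  | succ n ih =>
    rw [Finset.sum_range_succ, ih]
    have h : n + 1 + m = (n + m) + 1 := by omega
    rw [h, Nat.choose_succ_succ]
    simp only [Nat.succ_eq_add_one]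
    omega

private lemma keybin (n m k : ℕ) :
    ((k:ℤ)+n+m+1) * ((k+n+m).choose (k+m+1) : ℤ)
      = ((k:ℤ)+m+2) * ((k+n+m+1).choose (k+m+2) : ℤ) := by
  have h := Nat.add_one_mul_choose_eq (k+n+m) (k+m+1)
  have h' : (k+n+m+1) * (k+n+m).choose (k+m+1) = (k+m+2) * (k+n+m+1).choose (k+m+2) := by
    simpa [Nat.succ_eq_add_one, mul_comm] using h
  have := congrArg (Nat.cast : ℕ → ℤ) h'
  push_cast at this
  linarith [this]

private def Bz (n q m : ℕ) : ℤ :=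
  ∑ k ∈ Finset.range (q+1),
    (-1:ℤ)^k * (rstirling2 (n+1) q k : ℤ) * ((k+n+m).choose (k+m+1) : ℤ) * (Nat.factorial k : ℤ)

private def Gz (n q m : ℕ) : ℤ :=
  ∑ i ∈ Finset.range n, ((i+m).choose m : ℤ) * ((i:ℤ)+1)^q

private lemma Bz_zero (n m : ℕ) : Bz n 0 m = ((n+m).choose (m+1) : ℤ) := by
  simp [Bz, show rstirling2 (n+1) 0 0 = 1 from rfl]

private lemma Gz_zero (n m : ℕ) : Gz n 0 m = ((n+m).choose (m+1) : ℤ) := by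
  simp only [Gz, pow_zero, mul_one]
  rw [← Nat.cast_sum, hockey_s14]

private lemma Gz_rec (n q m : ℕ) : Gz n (q+1) m = (m+1) * Gz n q (m+1) - m * Gz n q m := by
  simp only [Gz, Finset.mul_sum, ← Finset.sum_sub_distrib]
  refine Finset.sum_congr rfl fun i _ => ?_
  have h' : (i+m+1) * (i+m).choose m = (m+1) * (i+m+1).choose (m+1) := by
    simpa [Nat.succ_eq_add_one, mul_comm] using Nat.add_one_mul_choose_eq (i+m) m
  have h2 := congrArg (Nat.cast : ℕ → ℤ) h'
  push_cast at h2
  rw [show i+(m+1) = i+m+1 from by omega]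
  linear_combination ((i:ℤ)+1)^q * h2

private lemma Bz_rec (n q m : ℕ) : Bz n (q+1) m = (m+1) * Bz n q (m+1) - m * Bz n q m := by
  have hz : rstirling2 (n+1) q (q+1) = 0 := rstirling2_zero_of_lt _ _ _ (by omega)
  have eBm1 : (m+1 : ℤ) * Bz n q (m+1) = ∑ k ∈ Finset.range (q+2),
      ((m:ℤ)+1) * ((-1:ℤ)^k * (rstirling2 (n+1) q k : ℤ)
        * ((k+n+m+1).choose (k+m+2) : ℤ) * (Nat.factorial k : ℤ)) := by
    rw [Bz, Finset.mul_sum, Finset.sum_range_succ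
      (fun k => ((m:ℤ)+1) * ((-1:ℤ)^k * (rstirling2 (n+1) q k : ℤ)
        * ((k+n+m+1).choose (k+m+2) : ℤ) * (Nat.factorial k : ℤ))) (q+1)]
    rw [hz]
    push_cast
    rw [Finset.sum_congr rfl (fun k _ => by
      rw [show k+n+(m+1) = k+n+m+1 from by omega, show k+(m+1)+1 = k+m+2 from by omega])]
    ring
  have eBm : (m : ℤ) * Bz n q m = ∑ k ∈ Finset.range (q+2),
      (m:ℤ) * ((-1:ℤ)^k * (rstirling2 (n+1) q k : ℤ)
        * ((k+n+m).choose (k+m+1) : ℤ) * (Nat.factorial k : ℤ)) := by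
    rw [Bz, Finset.mul_sum, Finset.sum_range_succ
      (fun k => (m:ℤ) * ((-1:ℤ)^k * (rstirling2 (n+1) q k : ℤ)
        * ((k+n+m).choose (k+m+1) : ℤ) * (Nat.factorial k : ℤ))) (q+1)]
    rw [hz]
    push_cast
    ring
  have step1 : Bz n (q+1) m
      = ∑ k ∈ Finset.range (q+2), ((-1:ℤ)^k * ((k:ℤ)+n+1) * (rstirling2 (n+1) q k : ℤ)
          * ((k+n+m).choose (k+m+1) : ℤ) * (Nat.factorial k : ℤ))
      + ∑ k ∈ Finset.range (q+2), (-((-1:ℤ)^k * (rstirling2 (n+1) q k : ℤ)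
          * ((k+n+m+1).choose (k+m+2) : ℤ) * (((k:ℤ)+1) * (Nat.factorial k : ℤ)))) := by
    rw [Bz, Finset.sum_range_succ' _ (q+1)]
    rw [Finset.sum_range_succ' (fun k => (-1:ℤ)^k * ((k:ℤ)+n+1) * (rstirling2 (n+1) q k : ℤ)
          * ((k+n+m).choose (k+m+1) : ℤ) * (Nat.factorial k : ℤ)) (q+1)]
    rw [Finset.sum_range_succ (fun k => -((-1:ℤ)^k * (rstirling2 (n+1) q k : ℤ)
          * ((k+n+m+1).choose (k+m+2) : ℤ) * (((k:ℤ)+1) * (Nat.factorial k : ℤ)))) (q+1)]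
    have hsum : (∑ k ∈ Finset.range (q+1), (-1:ℤ)^(k+1) * (rstirling2 (n+1) (q+1) (k+1) : ℤ)
          * ((k+1+n+m).choose (k+1+m+1) : ℤ) * (Nat.factorial (k+1) : ℤ))
        = ∑ k ∈ Finset.range (q+1), (((-1:ℤ)^(k+1) * ((k:ℤ)+1+n+1) * (rstirling2 (n+1) q (k+1) : ℤ)
          * ((k+1+n+m).choose (k+1+m+1) : ℤ) * (Nat.factorial (k+1) : ℤ))
          + (-((-1:ℤ)^k * (rstirling2 (n+1) q k : ℤ)
          * ((k+n+m+1).choose (k+m+2) : ℤ) * (((k:ℤ)+1) * (Nat.factorial k : ℤ))))) := by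
      refine Finset.sum_congr rfl fun k _ => ?_
      have hrec : rstirling2 (n+1) (q+1) (k+1)
          = (k+1+(n+1)) * rstirling2 (n+1) q (k+1) + rstirling2 (n+1) q k := rfl
      have hrec' := congrArg (Nat.cast : ℕ → ℤ) hrec
      push_cast at hrec'
      rw [hrec', show k+1+n+m = k+n+m+1 from by omega, show k+1+m+1 = k+m+2 from by omega,
        Nat.factorial_succ]
      push_cast
      ring
    rw [hsum, Finset.sum_add_distrib]
    have h0 : rstirling2 (n+1) (q+1) 0 = (n+1) * rstirling2 (n+1) q 0 := rfl
    have h0' := congrArg (Nat.cast : ℕ → ℤ) h0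
    push_cast at h0'
    rw [h0', hz]
    push_cast
    ring
  rw [step1, eBm1, eBm, ← Finset.sum_sub_distrib, ← Finset.sum_add_distrib]
  refine Finset.sum_congr rfl fun k _ => ?_
  have hb := keybin n m k
  linear_combination ((-1:ℤ)^k * (rstirling2 (n+1) q k : ℤ) * (Nat.factorial k : ℤ)) * hb

private lemma sum_shift (q : ℕ) : ∀ n : ℕ,
    ∑ k ∈ Finset.Icc 1 n, (k:ℤ)^q = ∑ i ∈ Finset.range n, ((i:ℤ)+1)^q := by
  intro n
  induction n with
  | zero => simp
  | succ n ihn =>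
    rw [Finset.sum_Icc_succ_top (by omega : 1 ≤ n+1), ihn, Finset.sum_range_succ]
    push_cast
    ring

private lemma Bz_eq_Gz (n : ℕ) : ∀ q m : ℕ, Bz n q m = Gz n q m := by
  intro q
  induction q with
  | zero => intro m; rw [Bz_zero, Gz_zero]
  | succ q ih => intro m; rw [Bz_rec, Gz_rec, ih, ih]

theorem stmt14 (n q : ℕ) (hn : 0 < n) (hq : 0 < q) (hqn : q ≤ n) :
    (hS q 0 n : ℤ) = ∑ k ∈ Finset.range (q+1),
      (-1:ℤ)^k * (rstirling2 (n+1) q k : ℤ) * ((k+n).choose (k+1) : ℤ) * (Nat.factorial k : ℤ) := by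
  have h1 : (hS q 0 n : ℤ) = ∑ k ∈ Finset.Icc 1 n, (k:ℤ)^q := by
    show ((∑ k ∈ Finset.Icc 1 n, k^q : ℕ) : ℤ) = _
    push_cast
    rfl
  have h2 : ∑ k ∈ Finset.Icc 1 n, (k:ℤ)^q = Gz n q 0 := by
    rw [Gz, sum_shift]
    simp
  have h3 : Bz n q 0 = ∑ k ∈ Finset.range (q+1),
      (-1:ℤ)^k * (rstirling2 (n+1) q k : ℤ) * ((k+n).choose (k+1) : ℤ) * (Nat.factorial k : ℤ) := rfl
  rw [h1, h2, ← Bz_eq_Gz, h3]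
end

section
/- For a prime number p, a positive integer n, and a nonnegative integer q, the poly-Bernoulli polynomial value satisfies B_n^{(-p)}(q) ≡ (q+2)^n (mod p). -/
open Finset

section Aux

open Finset

private lemma choose_mul_succ_cast (k m : ℕ) :
    ((k+1).choose (m+1) : ℤ) * ((m:ℤ)+1) = ((k:ℤ)+1) * (k.choose m : ℤ) := by
  have h : (k+1) * k.choose m = (k+1).choose (m+1) * (m+1) := Nat.add_one_mul_choose_eq k m
  exact_mod_cast h.symm

private lemma g_shift (n k : ℕ) :
    (∑ i ∈ Finset.range (k+2), (-1:ℤ)^i * ((k+1).choose i : ℤ) * (i:ℤ)^(n+1))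
      = -((k:ℤ)+1) * ∑ m ∈ Finset.range (k+1),
          (-1:ℤ)^m * (k.choose m : ℤ) * ((m:ℤ)+1)^n := by
  rw [Finset.sum_range_succ']
  simp only [Nat.cast_zero, ne_eq, Nat.succ_ne_zero, not_false_iff, zero_pow, mul_zero, add_zero]
  rw [Finset.mul_sum]
  apply Finset.sum_congr rfl
  intro m _
  have h := choose_mul_succ_cast k m
  push_cast
  linear_combination (-(-1:ℤ)^m * ((m:ℤ)+1)^n) * h

private lemma g_pascal (n k : ℕ) :
    (∑ m ∈ Finset.range (k+1), (-1:ℤ)^m * (k.choose m : ℤ) * ((m:ℤ)+1)^n)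
      = (∑ i ∈ Finset.range (k+1), (-1:ℤ)^i * (k.choose i : ℤ) * (i:ℤ)^n)
        - ∑ i ∈ Finset.range (k+2), (-1:ℤ)^i * ((k+1).choose i : ℤ) * (i:ℤ)^n := by
  set U : ℕ → ℤ := fun m => (-1:ℤ)^m * (k.choose (m+1) : ℤ) * ((m:ℤ)+1)^n with hU
  set T : ℕ → ℤ := fun m => (-1:ℤ)^m * (k.choose m : ℤ) * ((m:ℤ)+1)^n with hT
  have hG : (∑ i ∈ Finset.range (k+2), (-1:ℤ)^i * ((k+1).choose i : ℤ) * (i:ℤ)^n)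
      = (∑ m ∈ Finset.range (k+1), -(U m + T m)) + (0:ℤ)^n := by
    rw [Finset.sum_range_succ']
    simp only [Nat.cast_zero, pow_zero, Nat.choose_zero_right, Nat.cast_one, mul_one, one_mul]
    congr 1
    apply Finset.sum_congr rfl
    intro m _
    have h : ((k+1).choose (m+1) : ℤ) = (k.choose m : ℤ) + (k.choose (m+1) : ℤ) := by
      exact_mod_cast (Nat.choose_succ_succ k m)
    simp only [hU, hT]
    push_cast
    linear_combination (-(-1:ℤ)^m * ((m:ℤ)+1)^n) * h
  have hF : (∑ i ∈ Finset.range (k+1), (-1:ℤ)^i * (k.choose i : ℤ) * (i:ℤ)^n)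
      = (∑ m ∈ Finset.range k, -(U m)) + (0:ℤ)^n := by
    rw [Finset.sum_range_succ']
    simp only [Nat.cast_zero, pow_zero, Nat.choose_zero_right, Nat.cast_one, mul_one, one_mul]
    congr 1
    apply Finset.sum_congr rfl
    intro m _
    simp only [hU]
    push_cast
    ring
  have hUk : (∑ m ∈ Finset.range (k+1), U m) = ∑ m ∈ Finset.range k, U m := by
    rw [Finset.sum_range_succ]
    simp [hU, Nat.choose_succ_self]
  have hsplit : (∑ m ∈ Finset.range (k+1), -(U m + T m))
      = -((∑ m ∈ Finset.range (k+1), U m) + ∑ m ∈ Finset.range (k+1), T m) := by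
    rw [← Finset.sum_add_distrib, ← Finset.sum_neg_distrib]
  rw [hG, hF, hsplit, hUk]
  rw [show (∑ m ∈ Finset.range k, -U m) = -∑ m ∈ Finset.range k, U m from Finset.sum_neg_distrib _]
  ring

private lemma stirling2_formula (n : ℕ) : ∀ j : ℕ,
    (Nat.factorial j : ℤ) * (stirling2 n j : ℤ)
      = (-1:ℤ)^j * ∑ i ∈ Finset.range (j+1), (-1:ℤ)^i * (j.choose i : ℤ) * (i:ℤ)^n := by
  induction n with
  | zero =>
    intro j
    cases j with
    | zero => simp [stirling2]
    | succ k =>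
      have h0 : stirling2 0 (k+1) = 0 := rfl
      rw [h0]
      have halt := Int.alternating_sum_range_choose_of_ne (n := k+1) (Nat.succ_ne_zero k)
      have : (∑ i ∈ Finset.range (k+1+1), (-1:ℤ)^i * ((k+1).choose i : ℤ) * (i:ℤ)^0)
          = ∑ i ∈ Finset.range (k+1+1), (-1:ℤ)^i * ((k+1).choose i : ℤ) := by
        apply Finset.sum_congr rfl; intro i _; rw [pow_zero, mul_one]
      rw [this, halt]
      simp
  | succ n ih =>
    intro j
    cases j with
    | zero =>
      have h0 : stirling2 (n+1) 0 = 0 := rfl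
      simp [h0]
    | succ k =>
      have hrec : stirling2 (n+1) (k+1) = (k+1) * stirling2 n (k+1) + stirling2 n k := rfl
      have hfac : (Nat.factorial (k+1) : ℤ) = ((k:ℤ)+1) * (Nat.factorial k : ℤ) := by
        push_cast [Nat.factorial_succ]; ring
      have e1 : ((k:ℤ)+1) * (Nat.factorial k : ℤ) * (stirling2 n (k+1) : ℤ)
          = (-1:ℤ)^(k+1) * ∑ i ∈ Finset.range (k+2), (-1:ℤ)^i * ((k+1).choose i : ℤ) * (i:ℤ)^n := by
        rw [← hfac]; exact ih (k+1)
      have e2 := ih k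
      rw [hrec, hfac, g_shift n k, g_pascal n k]
      push_cast
      linear_combination ((k:ℤ)+1) * e1 + ((k:ℤ)+1) * e2

private lemma alt_sum_choose_mul (j : ℕ) (hj : 2 ≤ j) :
    (∑ i ∈ Finset.range (j+1), (-1:ℤ)^i * (j.choose i : ℤ) * (i:ℤ)) = 0 := by
  obtain ⟨l, rfl⟩ : ∃ l, j = l + 2 := ⟨j - 2, by omega⟩
  rw [Finset.sum_range_succ']
  simp only [Nat.cast_zero, mul_zero, add_zero]
  calc (∑ m ∈ Finset.range (l+2), (-1:ℤ)^(m+1) * (((l+2).choose (m+1) : ℤ)) * ((m+1:ℕ):ℤ))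
      = ∑ m ∈ Finset.range (l+2), -((l:ℤ)+2) * ((-1:ℤ)^m * ((l+1).choose m : ℤ)) := by
        apply Finset.sum_congr rfl
        intro m _
        have h := choose_mul_succ_cast (l+1) m
        push_cast at h ⊢
        linear_combination (-(-1:ℤ)^m) * h
    _ = -((l:ℤ)+2) * ∑ m ∈ Finset.range (l+2), (-1:ℤ)^m * ((l+1).choose m : ℤ) := by
        rw [Finset.mul_sum]
    _ = 0 := by
        rw [Int.alternating_sum_range_choose_of_ne (Nat.succ_ne_zero l), mul_zero]

private lemma stirling2_one (n : ℕ) (hn : 0 < n) : stirling2 n 1 = 1 := by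
  induction n with
  | zero => omega
  | succ m ih =>
    have h : stirling2 (m+1) 1 = 1 * stirling2 m 1 + stirling2 m 0 := rfl
    rw [h]
    cases m with
    | zero => rfl
    | succ l =>
      rw [ih (Nat.succ_pos l)]
      have h0 : stirling2 (l+1) 0 = 0 := rfl
      rw [h0]

private lemma key_dvd (p j : ℕ) (hp : p.Prime) (hj : 2 ≤ j) :
    ((Nat.factorial j : ℤ) * (stirling2 p j : ℤ) : ZMod p) = 0 := by
  haveI : Fact p.Prime := ⟨hp⟩
  have h := stirling2_formula p j
  have hcast : ((Nat.factorial j : ℤ) * (stirling2 p j : ℤ) : ZMod p)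
      = (-1:ZMod p)^j * ∑ i ∈ Finset.range (j+1),
          (-1:ZMod p)^i * (j.choose i : ZMod p) * (i:ZMod p)^p := by
    have := congrArg (fun x : ℤ => (x : ZMod p)) h
    push_cast at this
    exact_mod_cast this
  rw [hcast]
  have hfermat : ∀ i : ℕ, (i:ZMod p)^p = (i:ZMod p) := fun i => ZMod.pow_card _
  have : (∑ i ∈ Finset.range (j+1), (-1:ZMod p)^i * (j.choose i : ZMod p) * (i:ZMod p)^p)
      = ((∑ i ∈ Finset.range (j+1), (-1:ℤ)^i * (j.choose i : ℤ) * (i:ℤ) : ℤ) : ZMod p) := by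
    push_cast
    apply Finset.sum_congr rfl
    intro i _
    rw [hfermat i]
  rw [this, alt_sum_choose_mul j hj]
  simp

end Aux

theorem stmt18 (p n q : ℕ) (hp : p.Prime) (hn : 0 < n) :
    (∑ j ∈ Finset.Icc 1 p,
        (stirling2 p j : ℤ) * (-1:ℤ)^(p+j) * (Nat.factorial j : ℤ) * ((j:ℤ)+(q:ℤ)+1)^n)
      ≡ ((q:ℤ)+2)^n [ZMOD (p:ℤ)] := by
  haveI : Fact p.Prime := ⟨hp⟩
  have hp1 : 1 ≤ p := hp.one_lt.le.trans' (by omega)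
  rw [← ZMod.intCast_eq_intCast_iff]
  push_cast
  rw [Finset.sum_eq_single_of_mem 1 (Finset.mem_Icc.mpr ⟨le_refl 1, hp.one_lt.le⟩)]
  · -- the j = 1 term
    rw [stirling2_one p hp.pos]
    have hneg : ((-1:ZMod p))^(p+1) = 1 := by
      rcases hp.eq_two_or_odd' with h2 | hodd
      · subst h2
        rw [show ((-1:ZMod 2)) = 1 from rfl, one_pow]
      · exact Even.neg_one_pow (by rcases hodd with ⟨t, ht⟩; exact ⟨t+1, by omega⟩)
    rw [hneg]
    norm_num
    ring
  · intro j hj hj1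
    have hj2 : 2 ≤ j := by
      rcases Finset.mem_Icc.mp hj with ⟨h1, _⟩; omega
    have hkey := key_dvd p j hp hj2
    push_cast at hkey
    calc (stirling2 p j : ZMod p) * (-1:ZMod p)^(p+j) * (Nat.factorial j : ZMod p)
          * ((j:ZMod p)+(q:ZMod p)+1)^n
        = ((Nat.factorial j : ZMod p) * (stirling2 p j : ZMod p))
          * ((-1:ZMod p)^(p+j) * ((j:ZMod p)+(q:ZMod p)+1)^n) := by ring
      _ = 0 := by rw [hkey]; ring
end

section
/- For every prime number q ≥ 2 and every nonnegative integer r (with r arbitrary), and for k = 2, 3, ..., q-1, both the r-Stirling number of the first kind [q+r, k+r]_r and the r-Stirling number of the second kind {q+r, k+r}_r are divisible by q. -/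
open Finset

section Helpers
open Polynomial

lemma rstirling2_eq_zero (r : ℕ) : ∀ n k, n < k → rstirling2 r n k = 0
  | 0, _+1, _ => rfl
  | n+1, k+1, h => by
    show (k+1+r) * rstirling2 r n (k+1) + rstirling2 r n k = 0
    rw [rstirling2_eq_zero r n (k+1) (by omega), rstirling2_eq_zero r n k (by omega)]
    simp

section Step
variable {R : Type*} [CommRing R]

lemma step (D : ℕ → R[X]) (M : R[X]) (c a a' : ℕ → ℕ) (n : ℕ)
    (hM : ∀ k, M * D k = D (k+1) + C ((c k : ℕ) : R) * D k)
    (h0 : a' 0 = c 0 * a 0)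
    (hs : ∀ k, a' (k+1) = c (k+1) * a (k+1) + a k)
    (htop : a (n+1) = 0) :
    M * ∑ k ∈ range (n+1), C ((a k : ℕ) : R) * D k
      = ∑ k ∈ range (n+2), C ((a' k : ℕ) : R) * D k := by
  rw [Finset.mul_sum]
  have e1 : ∀ k ∈ range (n+1), M * (C ((a k : ℕ) : R) * D k)
      = C ((a k : ℕ) : R) * D (k+1) + C ((c k * a k : ℕ) : R) * D k := by
    intro k _
    rw [mul_left_comm, hM k]
    push_cast
    simp only [C_mul, C_add]
    ring
  rw [Finset.sum_congr rfl e1, Finset.sum_add_distrib,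
    Finset.sum_range_succ' (fun k => C ((c k * a k : ℕ) : R) * D k) n]
  have e2 : ∑ k ∈ range n, C ((c (k+1) * a (k+1) : ℕ) : R) * D (k+1)
      = ∑ k ∈ range (n+1), C ((c (k+1) * a (k+1) : ℕ) : R) * D (k+1) := by
    rw [Finset.sum_range_succ, htop]
    simp
  rw [e2, Finset.sum_range_succ' (fun k => C ((a' k : ℕ) : R) * D k) (n+1)]
  have e3 : ∀ k ∈ range (n+1), C ((a' (k+1) : ℕ) : R) * D (k+1)
      = C ((a k : ℕ) : R) * D (k+1) + C ((c (k+1) * a (k+1) : ℕ) : R) * D (k+1) := by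
    intro k _
    rw [hs k]
    push_cast
    simp only [C_mul, C_add]
    ring
  rw [Finset.sum_congr rfl e3, Finset.sum_add_distrib, h0]
  push_cast
  ring

lemma key2aux (r : ℕ) : ∀ n, (X + C ((r : ℕ) : R))^n
    = ∑ k ∈ range (n+1), C ((rstirling2 r n k : ℕ) : R) * descPochhammer R k
  | 0 => by simp [rstirling2]
  | n+1 => by
    rw [pow_succ, key2aux r n, mul_comm]
    apply step (descPochhammer R) _ (fun k => k + r) _ _ n
    · intro k
      rw [descPochhammer_succ_right]
      push_cast
      simp only [C_mul, C_add, C_eq_natCast]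
      ring
    · show rstirling2 r (n+1) 0 = (0 + r) * rstirling2 r n 0
      rw [zero_add]; rfl
    · intro k; rfl
    · exact rstirling2_eq_zero r n (n+1) (by omega)

lemma rstirling1_eq_zero (r : ℕ) : ∀ n k, n < k → rstirling1 r n k = 0
  | 0, _+1, _ => rfl
  | n+1, k+1, h => by
    show (n+r) * rstirling1 r n (k+1) + rstirling1 r n k = 0
    rw [rstirling1_eq_zero r n (k+1) (by omega), rstirling1_eq_zero r n k (by omega)]
    simp

lemma key1aux (r : ℕ) : ∀ n, (∏ i ∈ range n, (X + C ((r + i : ℕ) : R)))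
    = ∑ k ∈ range (n+1), C ((rstirling1 r n k : ℕ) : R) * X^k
  | 0 => by simp [rstirling1]
  | n+1 => by
    rw [Finset.prod_range_succ, key1aux r n, mul_comm]
    apply step (fun k => X^k) _ (fun _ => n + r) _ _ n
    · intro k
      push_cast
      simp only [C_mul, C_add]
      ring
    · rfl
    · intro k; rfl
    · exact rstirling1_eq_zero r n (n+1) (by omega)

lemma desc_prod : ∀ n, descPochhammer R n = ∏ i ∈ range n, (X - C ((i : ℕ) : R))
  | 0 => by simp
  | n+1 => by
    rw [descPochhammer_succ_right, desc_prod n, Finset.prod_range_succ, C_eq_natCast]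

end Step

section FieldPart
variable {F : Type*} [Field F] [Fintype F]

lemma prodUniv : (∏ a : F, (X - C a)) = X ^ Fintype.card F - X := by
  have h2 : (1:ℕ) < Fintype.card F := Fintype.one_lt_card
  have hm : (X ^ Fintype.card F - X : F[X]).Monic :=
    monic_X_pow_sub ((degree_X_le).trans_lt (by exact_mod_cast h2))
  have hroots := FiniteField.roots_X_pow_card_sub_X F
  have hcard : Multiset.card (X ^ Fintype.card F - X : F[X]).roots
      = (X ^ Fintype.card F - X : F[X]).natDegree := by
    rw [hroots, FiniteField.X_pow_card_sub_X_natDegree_eq F Fintype.one_lt_card]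
    simp
  have := prod_multiset_X_sub_C_of_monic_of_roots_card_eq hm hcard
  rw [hroots] at this
  rw [Finset.prod_eq_multiset_prod]
  exact this

end FieldPart

lemma reindex (q : ℕ) [NeZero q] {M : Type*} [CommMonoid M] (b : ℕ) (f : ZMod q → M) :
    ∏ i ∈ range q, f ((b + i : ℕ) : ZMod q) = ∏ a : ZMod q, f a := by
  apply Finset.prod_bij' (fun i _ => ((b + i : ℕ) : ZMod q))
    (fun a _ => ((a - (b : ZMod q)).val))
  · intro i hi
    exact Finset.mem_univ _
  · intro a _
    exact Finset.mem_range.mpr (ZMod.val_lt _)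
  · intro i hi
    push_cast
    rw [add_sub_cancel_left]
    rw [ZMod.val_natCast_of_lt (Finset.mem_range.mp hi)]
  · intro a _
    push_cast
    rw [ZMod.natCast_val, ZMod.cast_id, add_sub_cancel]
  · intro i _
    rfl

section Indep
variable {F : Type*} [Field F]

lemma indep : ∀ (m : ℕ) (c : ℕ → F),
    (∑ j ∈ range (m+1), C (c j) * descPochhammer F j) = 0 → ∀ k, k ≤ m → c k = 0
  | 0 => by
    intro c h k hk
    interval_cases k
    simpa using h
  | m+1 => by
    intro c h k hk
    have hm1 : c (m+1) = 0 := by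
      have hc := congrArg (fun p => coeff p (m+1)) h
      simp only [finset_sum_coeff, coeff_C_mul, coeff_zero] at hc
      rw [Finset.sum_eq_single (m+1)] at hc
      · have hco : (descPochhammer F (m+1)).coeff (m+1) = 1 := by
          have h1 := (monic_descPochhammer F (m+1)).coeff_natDegree
          rwa [descPochhammer_natDegree] at h1
        rwa [hco, mul_one] at hc
      · intro b hb hne
        rw [coeff_eq_zero_of_natDegree_lt, mul_zero]
        rw [descPochhammer_natDegree]
        have := Finset.mem_range.mp hb
        omega
      · intro h'
        exact absurd (Finset.mem_range.mpr (by omega)) h'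
    rcases Nat.lt_or_ge k (m+1) with hlt | hge
    · apply indep m c _ k (by omega)
      rw [Finset.sum_range_succ, hm1] at h
      simpa using h
    · have : k = m + 1 := by omega
      rw [this]; exact hm1

end Indep

lemma coeff_sum_pow {F : Type*} [CommRing F] (c : ℕ → F) (m k : ℕ) (hk : k < m) :
    coeff (∑ j ∈ range m, C (c j) * X^j) k = c k := by
  rw [finset_sum_coeff, Finset.sum_eq_single k]
  · simp
  · intro b _ hne
    rw [coeff_C_mul, coeff_X_pow, if_neg (fun hh => hne hh.symm), mul_zero]
  · intro h'
    exact absurd (Finset.mem_range.mpr hk) h'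


end Helpers

open Polynomial in
theorem stmt19 (q r k : ℕ) (hq : q.Prime) (hk2 : 2 ≤ k) (hkq : k ≤ q - 1) :
    (q:ℕ) ∣ rstirling1 r q k ∧ (q:ℕ) ∣ rstirling2 r q k := by
  haveI : Fact q.Prime := ⟨hq⟩
  have hq2 : 2 ≤ q := hq.two_le
  have hkq' : k < q := by omega
  have hdq : descPochhammer (ZMod q) q = X^q - X := by
    rw [desc_prod]
    have e : ∀ i ∈ range q,
        (X - C ((i : ℕ) : ZMod q)) = (fun a : ZMod q => X - C a) (((0 + i : ℕ) : ZMod q)) := by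
      intro i _; simp
    rw [Finset.prod_congr rfl e, reindex q 0 (fun a => X - C a)]
    have hneg : (∏ a : ZMod q, (X - C a)) = X ^ Fintype.card (ZMod q) - X := prodUniv
    rwa [ZMod.card] at hneg
  constructor
  · rw [← ZMod.natCast_eq_zero_iff]
    have hkey := key1aux (R := ZMod q) r q
    have hprod : (∏ i ∈ range q, (X + C ((r+i : ℕ) : ZMod q))) = X ^ q - X := by
      rw [reindex q r (fun a => X + C a)]
      have hneg : (∏ a : ZMod q, (X + C a)) = ∏ a : ZMod q, (X - C a) := by
        rw [← Equiv.prod_comp (Equiv.neg (ZMod q)) (fun a => X + C a)]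
        apply Finset.prod_congr rfl
        intro a _
        simp [sub_eq_add_neg]
      rw [hneg]
      have := prodUniv (F := ZMod q)
      rwa [ZMod.card] at this
    rw [hprod] at hkey
    have hco := congrArg (fun p => coeff p k) hkey
    simp only [coeff_sub, coeff_X_pow, coeff_X] at hco
    rw [coeff_sum_pow _ _ _ (by omega)] at hco
    rw [← hco]
    rw [if_neg (by omega), if_neg (by omega)]
    ring
  · rw [← ZMod.natCast_eq_zero_iff]
    have hkey := key2aux (R := ZMod q) r q
    have hch : (X + C ((r:ℕ) : ZMod q))^q = X^q + C ((r:ℕ) : ZMod q) := by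
      rw [add_pow_char, ← C_pow, ZMod.pow_card]
    set c : ℕ → ZMod q := fun j => ((rstirling2 r q j : ℕ) : ZMod q)
      - (if j = q then 1 else 0) - (if j = 1 then 1 else 0)
      - (if j = 0 then ((r:ℕ) : ZMod q) else 0) with hc
    have expand : ∑ j ∈ range (q+1), C (c j) * descPochhammer (ZMod q) j
        = (∑ j ∈ range (q+1), C ((rstirling2 r q j : ℕ) : ZMod q) * descPochhammer (ZMod q) j)
          - descPochhammer (ZMod q) q - descPochhammer (ZMod q) 1
          - C ((r:ℕ) : ZMod q) * descPochhammer (ZMod q) 0 := by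
      simp only [hc, C_sub, sub_mul, apply_ite C, C_1, C_0, ite_mul, one_mul, zero_mul,
        Finset.sum_sub_distrib, Finset.sum_ite_eq']
      rw [if_pos (Finset.mem_range.mpr (by omega)), if_pos (Finset.mem_range.mpr (by omega)),
        if_pos (Finset.mem_range.mpr (by omega))]
    have hsum : ∑ j ∈ range (q+1), C (c j) * descPochhammer (ZMod q) j = 0 := by
      rw [expand, ← hkey, hch, hdq]
      simp only [descPochhammer_one, descPochhammer_zero, mul_one]
      ring
    have hck := indep q c hsum k (by omega)
    rw [hc] at hck
    simp only [if_neg (by omega : ¬ k = q), if_neg (by omega : ¬ k = 1),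
      if_neg (by omega : ¬ k = 0)] at hck
    simpa using hck
end
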